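/- For every natural number n ≥ 1: (n+1) · Σ_{k=0}^{n} C(n,k)² · ∫_0^1 w^{2k} (1−w)^{2(n−k)} dw = ((n+1)/(2n+1)) · 4^n / C(2n,n), and moreover ((n+1)/(2n+1)) · 4^n / C(2n,n) ≤ 16·√(π n)/21. -/

import Mathlib

open Finset Polynomial

lemma descPoch_neg_half (j : ℕ) :
    (descPochhammer ℤ j).smeval (-(1:ℝ)/2) =
      (-1)^j * (2*j).factorial / (4^j * (j.factorial : ℝ)) := by
  induction j with
  | zero => simp
  | succ j ih =>
    rw [descPochhammer_succ_right, smeval_mul, ih, smeval_sub, smeval_X, smeval_natCast]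
    have h2 : ((2*(j+1)).factorial : ℝ) = (2*j+2)*((2*j+1)*(2*j).factorial) := by
      have h : 2*(j+1) = (2*j+1)+1 := by omega
      rw [h, Nat.factorial_succ, Nat.factorial_succ]; push_cast; ring
    have h3 : ((j+1).factorial : ℝ) = (j+1)*j.factorial := by
      rw [Nat.factorial_succ]; push_cast; ring
    rw [h2, h3]
    have hf1 : (j.factorial : ℝ) ≠ 0 := Nat.cast_ne_zero.mpr (Nat.factorial_ne_zero _)
    field_simp
    ring

lemma descPoch_neg_one (k : ℕ) :
    (descPochhammer ℤ k).smeval (-(1:ℝ)) = (-1)^k * (k.factorial : ℝ) := by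
  induction k with
  | zero => simp
  | succ k ih =>
    rw [descPochhammer_succ_right, smeval_mul, ih, smeval_sub, smeval_X, smeval_natCast,
      Nat.factorial_succ]
    push_cast
    ring

lemma ringChoose_neg_half (j : ℕ) :
    Ring.choose (-(1:ℝ)/2) j = (-1)^j * (2*j).factorial / (4^j * ((j.factorial : ℝ))^2) := by
  have h := Ring.descPochhammer_eq_factorial_smul_choose (-(1:ℝ)/2) j
  rw [descPoch_neg_half] at h
  have hf : (j.factorial : ℝ) ≠ 0 := Nat.cast_ne_zero.mpr (Nat.factorial_ne_zero _)
  rw [nsmul_eq_mul] at h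
  field_simp at h ⊢
  linarith [h]

lemma ringChoose_neg_one (k : ℕ) : Ring.choose (-(1:ℝ)) k = (-1)^k := by
  have h := Ring.descPochhammer_eq_factorial_smul_choose (-(1:ℝ)) k
  rw [descPoch_neg_one] at h
  have hf : (k.factorial : ℝ) ≠ 0 := Nat.cast_ne_zero.mpr (Nat.factorial_ne_zero _)
  rw [nsmul_eq_mul] at h
  have h2 : (k.factorial:ℝ) * Ring.choose (-(1:ℝ)) k = (k.factorial:ℝ) * (-1)^k := by
    rw [← h]; ring
  exact mul_left_cancel₀ hf h2

lemma centralBinom_conv (n : ℕ) :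
    ∑ k ∈ range (n+1), ((2*k).choose k : ℝ) * ((2*(n-k)).choose (n-k) : ℝ) = 4^n := by
  have h := Ring.add_choose_eq (R := ℝ) (r := -(1:ℝ)/2) (s := -(1:ℝ)/2) n (Commute.all _ _)
  have hadd : -(1:ℝ)/2 + -(1:ℝ)/2 = -1 := by norm_num
  rw [hadd, ringChoose_neg_one, Finset.Nat.sum_antidiagonal_eq_sum_range_succ_mk] at h
  simp only [ringChoose_neg_half] at h
  have hcast : ∀ k ∈ range (n+1), ((2*k).choose k : ℝ) * ((2*(n-k)).choose (n-k) : ℝ) =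
      (2*k).factorial / ((k.factorial:ℝ))^2 * ((2*(n-k)).factorial / (((n-k).factorial:ℝ))^2) := by
    intro k _
    rw [Nat.cast_choose ℝ (by omega : k ≤ 2*k), Nat.cast_choose ℝ (by omega : n-k ≤ 2*(n-k))]
    have e1 : 2*k - k = k := by omega
    have e2 : 2*(n-k) - (n-k) = n-k := by omega
    rw [e1, e2]; ring
  rw [Finset.sum_congr rfl hcast]
  have key : ∀ k ∈ range (n+1),
      (-1)^k * (2*k).factorial / (4^k * ((k.factorial:ℝ))^2) *
        ((-1)^(n-k) * (2*(n-k)).factorial / (4^(n-k) * (((n-k).factorial:ℝ))^2)) =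
      ((-1)^n / 4^n) * ((2*k).factorial / ((k.factorial:ℝ))^2 *
        ((2*(n-k)).factorial / (((n-k).factorial:ℝ))^2)) := by
    intro k hk
    have hk' : k ≤ n := by simpa [Nat.lt_succ_iff] using hk
    have hs : (-1:ℝ)^k * (-1)^(n-k) = (-1)^n := by
      rw [← pow_add]; congr 1; omega
    have hp : (4:ℝ)^k * 4^(n-k) = 4^n := by
      rw [← pow_add]; congr 1; omega
    field_simp
    rw [← hs, ← hp]
    ring
  have h2 : (-1:ℝ)^n = ((-1)^n / 4^n) * ∑ k ∈ range (n+1),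
      ((2*k).factorial / ((k.factorial:ℝ))^2 * ((2*(n-k)).factorial / (((n-k).factorial:ℝ))^2)) := by
    rw [Finset.mul_sum, ← Finset.sum_congr rfl key]
    simpa using h
  have h4 : ((-1:ℝ)^n) ≠ 0 := by
    simp [pow_ne_zero]
  have h5 : (4:ℝ)^n ≠ 0 := by positivity
  field_simp at h2
  rw [h2]
  exact Finset.sum_congr rfl fun k _ => (div_mul_div_comm _ _ _ _)

lemma fact_mul_prod (a : ℕ) (b : ℕ) :
    a.factorial * ∏ j ∈ range (b+1), (a+1+j) = (a+b+1).factorial := by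
  induction b with
  | zero => simp [Nat.factorial_succ, mul_comm]
  | succ b ih =>
    rw [Finset.prod_range_succ, ← mul_assoc, ih,
      show a + (b+1) + 1 = (a+b+1) + 1 from by omega, Nat.factorial_succ (a+b+1),
      show a+1+(b+1) = (a+b+1) + 1 from by omega]
    ring

lemma integral_pow_mul_one_sub_pow (a b : ℕ) :
    ∫ x in (0:ℝ)..1, x^a * (1-x)^b =
      (a.factorial : ℝ) * b.factorial / (a+b+1).factorial := by
  have hu : 0 < Complex.re ((a:ℂ)+1) := by
    simp [Complex.add_re]
    positivity
  have h := Complex.betaIntegral_eval_nat_add_one_right hu b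
  have hL : Complex.betaIntegral ((a:ℂ)+1) ((b:ℂ)+1) =
      ((∫ x in (0:ℝ)..1, x^a * (1-x)^b : ℝ) : ℂ) := by
    rw [Complex.betaIntegral, ← intervalIntegral.integral_ofReal]
    refine intervalIntegral.integral_congr fun x _ => ?_
    rw [add_sub_cancel_right, add_sub_cancel_right, Complex.cpow_natCast, Complex.cpow_natCast]
    push_cast
    ring
  have hprod : (∏ j ∈ range (b+1), ((a:ℂ)+1+j)) = (((a+b+1).factorial : ℕ) : ℂ) / ((a.factorial : ℕ) : ℂ) := by
    have hm : a.factorial * ∏ j ∈ range (b+1), (a+1+j) = (a+b+1).factorial :=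
      fact_mul_prod a b
    have hc : (∏ j ∈ range (b+1), ((a:ℂ)+1+j)) = ((∏ j ∈ range (b+1), (a+1+j) : ℕ) : ℂ) := by
      push_cast
      ring
    rw [hc]
    rw [eq_div_iff (by exact_mod_cast Nat.cast_ne_zero.mpr (Nat.factorial_ne_zero a))]
    rw [← Nat.cast_mul, mul_comm, hm]
  rw [hL, hprod] at h
  have hfa : ((a.factorial : ℕ) : ℂ) ≠ 0 := Nat.cast_ne_zero.mpr (Nat.factorial_ne_zero _)
  have hfab : (((a+b+1).factorial : ℕ) : ℂ) ≠ 0 := Nat.cast_ne_zero.mpr (Nat.factorial_ne_zero _)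
  rw [div_div_eq_mul_div] at h
  have : ((∫ x in (0:ℝ)..1, x^a * (1-x)^b : ℝ) : ℂ) =
      (((a.factorial : ℝ) * b.factorial / (a+b+1).factorial : ℝ) : ℂ) := by
    rw [h]
    push_cast
    field_simp
  exact_mod_cast this

lemma four_pow_le_sqrt_mul (n : ℕ) (hn : 1 ≤ n) :
    (4:ℝ)^n ≤ 2 * Real.sqrt n * ((2*n).choose n : ℝ) := by
  induction n, hn using Nat.le_induction with
  | base => norm_num
  | succ n hn ih =>
    have hcb := Nat.succ_mul_centralBinom_succ n
    simp only [Nat.centralBinom] at hcb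
    have hc : ((n:ℝ)+1) * ((2*(n+1)).choose (n+1) : ℝ) = 2*(2*n+1) * ((2*n).choose n : ℝ) := by
      have : ((n+1) * ((2*(n+1)).choose (n+1)) : ℕ) = (2*(2*n+1) * ((2*n).choose n) : ℕ) := by
        convert hcb using 2 <;> omega
      exact_mod_cast this
    set s := Real.sqrt n with hs
    set t := Real.sqrt (n+1) with ht
    have hs0 : 0 ≤ s := Real.sqrt_nonneg _
    have ht0 : 0 ≤ t := Real.sqrt_nonneg _
    have hs2 : s^2 = n := Real.sq_sqrt (by positivity)
    have ht2 : t^2 = n+1 := by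
      rw [ht]
      rw [show ((n:ℝ)+1) = ((n+1 : ℕ) : ℝ) by push_cast; ring]
      exact Real.sq_sqrt (by positivity)
    have key : 2 * s * ((n:ℝ)+1) ≤ (2*n+1) * t := by
      nlinarith [sq_nonneg (s - t), sq_nonneg (s*t - n)]
    have hcpos : (0:ℝ) < ((2*n).choose n : ℝ) := by
      exact_mod_cast Nat.choose_pos (by omega)
    have hcpos' : (0:ℝ) < ((2*(n+1)).choose (n+1) : ℝ) := by
      exact_mod_cast Nat.choose_pos (by omega)
    have h4 : (0:ℝ) < 4^n := by positivity
    rw [pow_succ]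
    push_cast
    nlinarith [mul_le_mul_of_nonneg_right key hcpos.le,
      mul_le_mul_of_nonneg_right ih (le_of_lt hcpos'),
      mul_pos hcpos hcpos']



/-- Closed form for the chi-squared mutual information (plus one) between a uniform
Bernoulli bias and `n` samples, and its upper bound:
`(n+1) Σ_k C(n,k)² ∫₀¹ w^{2k}(1−w)^{2(n−k)} dw = ((n+1)/(2n+1))·4ⁿ/C(2n,n) ≤ 16√(πn)/21`. -/
theorem bernoulli_chi_squared_closed_form (n : ℕ) (hn : 1 ≤ n) :
    ((n : ℝ) + 1) * ∑ k ∈ Finset.range (n + 1), (n.choose k : ℝ) ^ 2 *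
          ∫ w in (0 : ℝ)..1, w ^ (2 * k) * (1 - w) ^ (2 * (n - k))
        = (((n : ℝ) + 1) / (2 * n + 1)) * 4 ^ n / ((2 * n).choose n : ℝ) ∧
      (((n : ℝ) + 1) / (2 * n + 1)) * 4 ^ n / ((2 * n).choose n : ℝ)
        ≤ 16 * Real.sqrt (Real.pi * n) / 21 := by
  constructor
  · have hint : ∀ k ∈ range (n+1), (n.choose k : ℝ)^2 *
        ∫ w in (0:ℝ)..1, w ^ (2*k) * (1-w) ^ (2*(n-k)) =
        ((n.factorial:ℝ)^2 / ((2*n+1).factorial)) *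
          (((2*k).choose k : ℝ) * ((2*(n-k)).choose (n-k) : ℝ)) := by
      intro k hk
      have hk' : k ≤ n := by simpa [Nat.lt_succ_iff] using hk
      rw [integral_pow_mul_one_sub_pow,
        show 2*k + 2*(n-k) + 1 = 2*n+1 from by omega,
        Nat.cast_choose ℝ hk', Nat.cast_choose ℝ (show k ≤ 2*k by omega),
        Nat.cast_choose ℝ (show n-k ≤ 2*(n-k) by omega),
        show 2*k - k = k from by omega, show 2*(n-k) - (n-k) = n-k from by omega]
      have f1 : (k.factorial : ℝ) ≠ 0 := Nat.cast_ne_zero.mpr (Nat.factorial_ne_zero _)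
      have f2 : ((n-k).factorial : ℝ) ≠ 0 := Nat.cast_ne_zero.mpr (Nat.factorial_ne_zero _)
      have f3 : ((2*n+1).factorial : ℝ) ≠ 0 := Nat.cast_ne_zero.mpr (Nat.factorial_ne_zero _)
      field_simp
    rw [Finset.sum_congr rfl hint, ← Finset.mul_sum, centralBinom_conv,
      Nat.cast_choose ℝ (show n ≤ 2*n by omega), show 2*n - n = n from by omega,
      show (2*n+1).factorial = (2*n+1) * (2*n).factorial from Nat.factorial_succ (2*n)]
    have f1 : (n.factorial : ℝ) ≠ 0 := Nat.cast_ne_zero.mpr (Nat.factorial_ne_zero _)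
    have f2 : ((2*n).factorial : ℝ) ≠ 0 := Nat.cast_ne_zero.mpr (Nat.factorial_ne_zero _)
    have f3 : ((2*n:ℕ):ℝ) + 1 ≠ 0 := by positivity
    push_cast
    field_simp
  · have hc : (0:ℝ) < ((2*n).choose n : ℝ) := by
      exact_mod_cast Nat.choose_pos (show n ≤ 2*n by omega)
    have h1 : (4:ℝ)^n / ((2*n).choose n : ℝ) ≤ 2 * Real.sqrt n :=
      (div_le_iff₀ hc).mpr (four_pow_le_sqrt_mul n hn)
    have h2 : ((n:ℝ)+1) / (2*n+1) ≤ 2/3 := by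
      rw [div_le_div_iff₀ (by positivity) (by norm_num)]
      have : (1:ℝ) ≤ n := by exact_mod_cast hn
      nlinarith
    have hs0 : 0 ≤ Real.sqrt n := Real.sqrt_nonneg _
    have hstep : (((n:ℝ)+1) / (2*n+1)) * 4^n / ((2*n).choose n : ℝ) ≤ (2/3) * (2 * Real.sqrt n) := by
      rw [mul_div_assoc]
      exact mul_le_mul h2 h1 (by positivity) (by norm_num)
    refine hstep.trans ?_
    rw [Real.sqrt_mul Real.pi_nonneg]
    have hp2 : Real.sqrt Real.pi ^ 2 = Real.pi := Real.sq_sqrt Real.pi_nonneg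
    have hp0 : 0 ≤ Real.sqrt Real.pi := Real.sqrt_nonneg _
    have hpi : (49/16:ℝ) ≤ Real.pi := by nlinarith [Real.pi_gt_d6]
    have hp : (7/4:ℝ) ≤ Real.sqrt Real.pi := by nlinarith
    nlinarith [mul_le_mul_of_nonneg_right hp hs0]
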